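/- For the n-th Chebyshev polynomial T_n of the first kind and a fixed 0 < α < 2, as n → ∞ one has T_n(n^{2-α}/(n^{2-α}-1)) = e^{(√2 + o(1)) n^{α/2}}. -/

import Mathlib

open Filter

private lemma cosh_log_aux' {x : ℝ} (hx : 1 ≤ x) :
    Real.cosh (Real.log (x + Real.sqrt (x ^ 2 - 1))) = x := by
  have h1 : (0:ℝ) ≤ x ^ 2 - 1 := by nlinarith
  have hs : Real.sqrt (x ^ 2 - 1) ^ 2 = x ^ 2 - 1 := Real.sq_sqrt h1
  have hs0 : 0 ≤ Real.sqrt (x ^ 2 - 1) := Real.sqrt_nonneg _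
  have hu : 0 < x + Real.sqrt (x ^ 2 - 1) := by nlinarith
  rw [Real.cosh_log hu,
    show (x + Real.sqrt (x ^ 2 - 1))⁻¹ = x - Real.sqrt (x ^ 2 - 1) from
      inv_eq_of_mul_eq_one_right (by nlinarith)]
  ring

private lemma T_real_cosh' (t : ℝ) (n : ℤ) :
    (Polynomial.Chebyshev.T ℝ n).eval (Real.cosh t) = Real.cosh (n * t) := by
  have h := Polynomial.Chebyshev.T_complex_cos ((t : ℂ) * Complex.I) n
  rw [Complex.cos_mul_I,
    show (n : ℂ) * ((t : ℂ) * Complex.I) = ((n * t : ℝ) : ℂ) * Complex.I by push_cast; ring,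
    Complex.cos_mul_I] at h
  have h2 := Polynomial.Chebyshev.complex_ofReal_eval_T (Real.cosh t) n
  rw [Complex.ofReal_cosh, h] at h2
  exact_mod_cast h2.trans (Complex.ofReal_cosh _).symm

private lemma T_eval_eq' {x : ℝ} (hx : 1 ≤ x) (n : ℤ) :
    (Polynomial.Chebyshev.T ℝ n).eval x
      = Real.cosh (n * Real.log (x + Real.sqrt (x ^ 2 - 1))) := by
  conv_lhs => rw [← cosh_log_aux' hx]
  exact T_real_cosh' _ n

private lemma log_bounds' {ε : ℝ} (hε : 0 < ε) :
    Real.sqrt (2 * ε) - 2 * ε ≤ Real.log (1 + (ε + Real.sqrt (ε ^ 2 + 2 * ε))) ∧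
      Real.log (1 + (ε + Real.sqrt (ε ^ 2 + 2 * ε))) ≤ Real.sqrt (2 * ε) + 2 * ε := by
  have ha0 : 0 ≤ Real.sqrt (2 * ε) := Real.sqrt_nonneg _
  have ha : Real.sqrt (2 * ε) ^ 2 = 2 * ε := Real.sq_sqrt (by linarith)
  have hb0 : 0 ≤ Real.sqrt (ε ^ 2 + 2 * ε) := Real.sqrt_nonneg _
  have hb : Real.sqrt (ε ^ 2 + 2 * ε) ^ 2 = ε ^ 2 + 2 * ε := Real.sq_sqrt (by nlinarith)
  constructor
  · have h1 : Real.sqrt (2 * ε) ≤ ε + Real.sqrt (ε ^ 2 + 2 * ε) := by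
      have := Real.sqrt_le_sqrt (show 2 * ε ≤ ε ^ 2 + 2 * ε by nlinarith)
      linarith
    have h2 : Real.log (1 + Real.sqrt (2 * ε)) ≤
        Real.log (1 + (ε + Real.sqrt (ε ^ 2 + 2 * ε))) :=
      Real.log_le_log (by linarith) (by linarith)
    have h3 : 1 - (1 + Real.sqrt (2 * ε))⁻¹ ≤ Real.log (1 + Real.sqrt (2 * ε)) :=
      Real.one_sub_inv_le_log_of_pos (by linarith)
    have h4 : Real.sqrt (2 * ε) - 2 * ε ≤
        Real.sqrt (2 * ε) / (1 + Real.sqrt (2 * ε)) := by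
      rw [le_div_iff₀ (by linarith)]
      nlinarith
    have h5 : Real.sqrt (2 * ε) / (1 + Real.sqrt (2 * ε))
        = 1 - (1 + Real.sqrt (2 * ε))⁻¹ := by
      field_simp; ring
    linarith
  · have h1 : Real.log (1 + (ε + Real.sqrt (ε ^ 2 + 2 * ε)))
        ≤ ε + Real.sqrt (ε ^ 2 + 2 * ε) := by
      have := Real.log_le_sub_one_of_pos
        (show (0:ℝ) < 1 + (ε + Real.sqrt (ε ^ 2 + 2 * ε)) by linarith)
      linarith
    have h2 : Real.sqrt (ε ^ 2 + 2 * ε) ≤ ε + Real.sqrt (2 * ε) := by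
      have h := Real.sqrt_le_sqrt
        (show ε ^ 2 + 2 * ε ≤ (ε + Real.sqrt (2 * ε)) ^ 2 by nlinarith)
      rwa [Real.sqrt_sq (by linarith)] at h
    linarith

private lemma sandwich' (α : ℝ) (hα0 : 0 < α) (hα2 : α < 2) {n : ℕ} (hn : 2 ≤ n) :
    0 < (Polynomial.Chebyshev.T ℝ (n : ℤ)).eval
        ((n:ℝ) ^ (2-α) / ((n:ℝ) ^ (2-α) - 1)) ∧
    Real.sqrt (2 * ((n:ℝ) ^ (2-α) / ((n:ℝ) ^ (2-α) - 1)))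
        - 2 * ((n:ℝ) ^ (α/2 - 1) * ((n:ℝ) ^ (2-α) / ((n:ℝ) ^ (2-α) - 1)))
        - Real.log 2 / (n:ℝ) ^ (α/2)
      ≤ Real.log ((Polynomial.Chebyshev.T ℝ (n : ℤ)).eval
          ((n:ℝ) ^ (2-α) / ((n:ℝ) ^ (2-α) - 1))) / (n:ℝ) ^ (α/2) ∧
    Real.log ((Polynomial.Chebyshev.T ℝ (n : ℤ)).eval
          ((n:ℝ) ^ (2-α) / ((n:ℝ) ^ (2-α) - 1))) / (n:ℝ) ^ (α/2)
      ≤ Real.sqrt (2 * ((n:ℝ) ^ (2-α) / ((n:ℝ) ^ (2-α) - 1)))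
        + 2 * ((n:ℝ) ^ (α/2 - 1) * ((n:ℝ) ^ (2-α) / ((n:ℝ) ^ (2-α) - 1))) := by
  have hn1 : (1:ℝ) < (n:ℝ) := by exact_mod_cast Nat.lt_of_lt_of_le one_lt_two hn
  have hn0 : (0:ℝ) < (n:ℝ) := by linarith
  set N : ℝ := (n:ℝ) ^ (2-α) with hNdef
  set p : ℝ := (n:ℝ) ^ (α/2) with hpdef
  have hN : 1 < N := (Real.one_lt_rpow_iff_of_pos hn0).mpr (Or.inl ⟨hn1, by linarith⟩)
  have hN1 : 0 < N - 1 := by linarith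
  set ε : ℝ := (N - 1)⁻¹ with hεdef
  have hε : 0 < ε := inv_pos.mpr hN1
  set y : ℝ := N / (N - 1) with hydef
  have hyε : y = 1 + ε := by rw [hydef, hεdef]; field_simp; ring
  have hy1 : 1 ≤ y := by rw [hyε]; linarith
  have hy2 : y ^ 2 - 1 = ε ^ 2 + 2 * ε := by rw [hyε]; ring
  set t : ℝ := Real.log (y + Real.sqrt (y ^ 2 - 1)) with htdef
  have hE : (Polynomial.Chebyshev.T ℝ (n : ℤ)).eval y = Real.cosh ((n:ℝ) * t) := by
    rw [T_eval_eq' hy1 (n : ℤ)]; norm_num; rfl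
  have harg : y + Real.sqrt (y ^ 2 - 1) = 1 + (ε + Real.sqrt (ε ^ 2 + 2 * ε)) := by
    rw [hy2, hyε]; ring
  obtain ⟨htl, htu⟩ := log_bounds' hε
  rw [← harg, ← htdef] at htl htu
  have ht0 : 0 ≤ t := Real.log_nonneg (by
    have := Real.sqrt_nonneg (y ^ 2 - 1); linarith)
  have hp : 0 < p := Real.rpow_pos_of_pos hn0 _
  have hs0 : 0 ≤ (n:ℝ) * t := by positivity
  have hEpos : 0 < (Polynomial.Chebyshev.T ℝ (n : ℤ)).eval y := by
    rw [hE]; exact Real.cosh_pos _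
  have hE_up : Real.log ((Polynomial.Chebyshev.T ℝ (n : ℤ)).eval y) ≤ (n:ℝ) * t := by
    rw [hE, Real.log_le_iff_le_exp (Real.cosh_pos _), Real.cosh_eq]
    have h := Real.exp_le_exp.mpr (neg_le_self hs0)
    linarith
  have hE_lo : (n:ℝ) * t - Real.log 2 ≤
      Real.log ((Polynomial.Chebyshev.T ℝ (n : ℤ)).eval y) := by
    rw [hE, Real.le_log_iff_exp_le (Real.cosh_pos _), Real.exp_sub,
      Real.exp_log two_pos, Real.cosh_eq]
    have h := (Real.exp_pos (-((n:ℝ) * t))).le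
    linarith
  -- identities
  have e1 : (n:ℝ) / p = (n:ℝ) ^ ((1:ℝ) - α/2) := by
    rw [Real.rpow_sub hn0, Real.rpow_one]
  have e2 : (n:ℝ) ^ ((1:ℝ) - α/2) = Real.sqrt N := by
    rw [hNdef, Real.sqrt_eq_rpow, ← Real.rpow_mul hn0.le]
    congr 1; ring
  have I1 : (n:ℝ) / p * Real.sqrt (2 * ε) = Real.sqrt (2 * y) := by
    rw [e1, e2, ← Real.sqrt_mul (by positivity : (0:ℝ) ≤ N)]
    congr 1
    rw [hεdef, hydef]; field_simp
  have e3 : (n:ℝ) ^ ((1:ℝ) - α/2) = (n:ℝ) ^ (α/2 - 1) * N := by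
    rw [hNdef, ← Real.rpow_add hn0]; congr 1; ring
  have I2 : (n:ℝ) / p * ε = (n:ℝ) ^ (α/2 - 1) * y := by
    rw [e1, e3, hεdef, hydef, div_eq_mul_inv]; ring
  refine ⟨hEpos, ?_, ?_⟩
  · have h1 : ((n:ℝ) * (Real.sqrt (2 * ε) - 2 * ε) - Real.log 2) / p ≤
        ((n:ℝ) * t - Real.log 2) / p := by
      gcongr
    have h2 : ((n:ℝ) * t - Real.log 2) / p ≤
        Real.log ((Polynomial.Chebyshev.T ℝ (n : ℤ)).eval y) / p := by
      gcongr
    have h3 : ((n:ℝ) * (Real.sqrt (2 * ε) - 2 * ε) - Real.log 2) / p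
        = (n:ℝ) / p * Real.sqrt (2 * ε) - 2 * ((n:ℝ) / p * ε) - Real.log 2 / p := by
      ring
    rw [h3, I1, I2] at h1
    linarith
  · have h1 : Real.log ((Polynomial.Chebyshev.T ℝ (n : ℤ)).eval y) / p ≤
        ((n:ℝ) * t) / p := by
      gcongr
    have h2 : ((n:ℝ) * t) / p ≤ ((n:ℝ) * (Real.sqrt (2 * ε) + 2 * ε)) / p := by
      gcongr
    have h3 : ((n:ℝ) * (Real.sqrt (2 * ε) + 2 * ε)) / p
        = (n:ℝ) / p * Real.sqrt (2 * ε) + 2 * ((n:ℝ) / p * ε) := by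
      ring
    rw [h3, I1, I2] at h2
    linarith

/-- for fixed 0 < α < 2, as n → ∞,
T_n(n^{2-α}/(n^{2-α}-1)) = e^{(√2 + o(1)) n^{α/2}}. -/
theorem chebyshev_growth (α : ℝ) (hα0 : 0 < α) (hα2 : α < 2) :
    ∃ f : ℕ → ℝ, Tendsto f atTop (nhds 0) ∧
      ∀ n : ℕ, 2 ≤ n →
        (Polynomial.Chebyshev.T ℝ (n : ℤ)).eval
            ((n : ℝ) ^ (2 - α) / ((n : ℝ) ^ (2 - α) - 1))
          = Real.exp ((Real.sqrt 2 + f n) * (n : ℝ) ^ (α / 2)) := by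
  have hβ : (0:ℝ) < 2 - α := by linarith
  refine ⟨fun n => Real.log ((Polynomial.Chebyshev.T ℝ (n : ℤ)).eval
      ((n : ℝ) ^ (2 - α) / ((n : ℝ) ^ (2 - α) - 1))) / (n : ℝ) ^ (α / 2)
      - Real.sqrt 2, ?_, ?_⟩
  · -- Tendsto to 0
    have hNt : Tendsto (fun n : ℕ => (n:ℝ) ^ (2-α)) atTop atTop :=
      (tendsto_rpow_atTop hβ).comp tendsto_natCast_atTop_atTop
    have hN1t : Tendsto (fun n : ℕ => (n:ℝ) ^ (2-α) - 1) atTop atTop := by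
      simpa [sub_eq_add_neg] using tendsto_atTop_add_const_right atTop (-1) hNt
    have hεt : Tendsto (fun n : ℕ => ((n:ℝ) ^ (2-α) - 1)⁻¹) atTop (nhds 0) :=
      hN1t.inv_tendsto_atTop
    have hyt : Tendsto (fun n : ℕ => (n:ℝ) ^ (2-α) / ((n:ℝ) ^ (2-α) - 1)) atTop (nhds 1) := by
      have h := (tendsto_const_nhds : Tendsto (fun _ : ℕ => (1:ℝ)) atTop (nhds 1)).add hεt
      rw [add_zero] at h
      refine (h : Tendsto (fun n : ℕ => 1 + ((n:ℝ) ^ (2-α) - 1)⁻¹) atTop (nhds 1)).congr' ?_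
      filter_upwards [eventually_ge_atTop 2] with n hn
      have hn1 : (1:ℝ) < (n:ℝ) := by exact_mod_cast Nat.lt_of_lt_of_le one_lt_two hn
      have hN : 1 < (n:ℝ) ^ (2-α) :=
        (Real.one_lt_rpow_iff_of_pos (by linarith)).mpr (Or.inl ⟨hn1, hβ⟩)
      have hN1 : (n:ℝ) ^ (2-α) - 1 ≠ 0 := by linarith
      field_simp; ring
    have h1 : Tendsto (fun n : ℕ =>
        Real.sqrt (2 * ((n:ℝ) ^ (2-α) / ((n:ℝ) ^ (2-α) - 1)))) atTop
        (nhds (Real.sqrt 2)) := by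
      have c : Continuous fun x : ℝ => Real.sqrt (2 * x) :=
        Real.continuous_sqrt.comp (continuous_const.mul continuous_id)
      have := (c.tendsto 1).comp hyt
      simpa [Function.comp_def] using this
    have hq : Tendsto (fun n : ℕ => (n:ℝ) ^ (α/2 - 1)) atTop (nhds 0) := by
      have := (tendsto_rpow_neg_atTop (show (0:ℝ) < 1 - α/2 by linarith)).comp
        tendsto_natCast_atTop_atTop
      simpa [neg_sub, Function.comp_def] using this
    have h2 : Tendsto (fun n : ℕ =>
        (n:ℝ) ^ (α/2 - 1) * ((n:ℝ) ^ (2-α) / ((n:ℝ) ^ (2-α) - 1))) atTop (nhds 0) := by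
      simpa using hq.mul hyt
    have hpt : Tendsto (fun n : ℕ => (n:ℝ) ^ (α/2)) atTop atTop :=
      (tendsto_rpow_atTop (by linarith : (0:ℝ) < α/2)).comp tendsto_natCast_atTop_atTop
    have h3 : Tendsto (fun n : ℕ => Real.log 2 / (n:ℝ) ^ (α/2)) atTop (nhds 0) :=
      tendsto_const_nhds.div_atTop hpt
    have hlow : Tendsto (fun n : ℕ =>
        Real.sqrt (2 * ((n:ℝ) ^ (2-α) / ((n:ℝ) ^ (2-α) - 1)))
          - 2 * ((n:ℝ) ^ (α/2 - 1) * ((n:ℝ) ^ (2-α) / ((n:ℝ) ^ (2-α) - 1)))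
          - Real.log 2 / (n:ℝ) ^ (α/2)) atTop (nhds (Real.sqrt 2)) := by
      have := (h1.sub (h2.const_mul 2)).sub h3
      simpa using this
    have hup : Tendsto (fun n : ℕ =>
        Real.sqrt (2 * ((n:ℝ) ^ (2-α) / ((n:ℝ) ^ (2-α) - 1)))
          + 2 * ((n:ℝ) ^ (α/2 - 1) * ((n:ℝ) ^ (2-α) / ((n:ℝ) ^ (2-α) - 1))))
        atTop (nhds (Real.sqrt 2)) := by
      have := h1.add (h2.const_mul 2)
      simpa using this
    have hsq : Tendsto (fun n : ℕ =>
        Real.log ((Polynomial.Chebyshev.T ℝ (n : ℤ)).eval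
          ((n : ℝ) ^ (2 - α) / ((n : ℝ) ^ (2 - α) - 1))) / (n : ℝ) ^ (α / 2)) atTop
        (nhds (Real.sqrt 2)) := by
      refine tendsto_of_tendsto_of_tendsto_of_le_of_le' hlow hup ?_ ?_
      · filter_upwards [eventually_ge_atTop 2] with n hn
        exact (sandwich' α hα0 hα2 hn).2.1
      · filter_upwards [eventually_ge_atTop 2] with n hn
        exact (sandwich' α hα0 hα2 hn).2.2
    simpa using hsq.sub_const (Real.sqrt 2)
  · intro n hn
    have hn0 : (0:ℝ) < (n:ℝ) := by positivity
    have hp : 0 < (n:ℝ) ^ (α/2) := Real.rpow_pos_of_pos hn0 _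
    have hEpos := (sandwich' α hα0 hα2 hn).1
    beta_reduce
    rw [show (Real.sqrt 2 + (Real.log ((Polynomial.Chebyshev.T ℝ (n : ℤ)).eval
        ((n : ℝ) ^ (2 - α) / ((n : ℝ) ^ (2 - α) - 1))) / (n : ℝ) ^ (α / 2)
        - Real.sqrt 2)) * (n : ℝ) ^ (α / 2)
      = Real.log ((Polynomial.Chebyshev.T ℝ (n : ℤ)).eval
        ((n : ℝ) ^ (2 - α) / ((n : ℝ) ^ (2 - α) - 1))) by field_simp; ring,
      Real.exp_log hEpos]
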